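/- For every n ∈ ℕ and every x ∈ [t n, t (n+1)): (∫_{(0,x)} μ(s) ds) · (∫_{(x,L)} μ(s)⁻¹ ds) ≤ (Σ_{k=0}^n s_k s_{k+1} ℓ_k) · (Σ_{k=n}^∞ ℓ_k/(s_k s_{k+1})). Moreover, for the midpoint x_n = (t n + t (n+1))/2 one has (∫_{(0,x_n)} μ(s) ds) · (∫_{(x_n,L)} μ(s)⁻¹ ds) ≥ (1/4) (Σ_{k=0}^n s_k s_{k+1} ℓ_k) · (Σ_{k=n}^∞ ℓ_k/(s_k s_{k+1})). Both inequalities hold in [0,∞]. -/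

import Mathlib

open MeasureTheory Filter Topology
open scoped ENNReal

/-- Auxiliary: lintegral of `ofReal ∘ g` over a set where `g` is constant. -/
lemma kacKrein_lint_const {g : ℝ → ℝ} {c : ℝ} {A : Set ℝ} (hA : MeasurableSet A)
    (h : ∀ y ∈ A, g y = c) :
    ∫⁻ y in A, ENNReal.ofReal (g y) = ENNReal.ofReal c * volume A := by
  rw [setLIntegral_congr_fun hA (fun y hy => by rw [h y hy]),
    setLIntegral_const]

/-- Two-sided comparison between the Kac–Krein function
`Φ(x) = ∫₀ˣ μ · ∫ₓᴸ 1/μ` and the discrete quantity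
`(Σ_{k ≤ n} sₖ sₖ₊₁ ℓₖ)(Σ_{k ≥ n} ℓₖ/(sₖ sₖ₊₁))`, in `[0,∞]`. -/
theorem kacKrein_function_estimates (s : ℕ → ℕ) (hs : ∀ n, 1 ≤ s n)
    (ℓ : ℕ → ℝ) (hℓ : ∀ n, 0 < ℓ n)
    (t : ℕ → ℝ) (ht0 : t 0 = 0) (htrec : ∀ n, t (n + 1) = t n + ℓ n)
    (L : ℝ≥0∞) (hL : L = ∑' n, ENNReal.ofReal (ℓ n))
    (μ : ℝ → ℝ)
    (hμ : ∀ n : ℕ, ∀ x ∈ Set.Ico (t n) (t (n + 1)), μ x = (s n : ℝ) * (s (n + 1) : ℝ))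
    (hμout : ∀ x : ℝ, (x < 0 ∨ L ≤ ENNReal.ofReal x) → μ x = 1) :
    (∀ n : ℕ, ∀ x ∈ Set.Ico (t n) (t (n + 1)),
      (∫⁻ y in Set.Ioo 0 x, ENNReal.ofReal (μ y)) *
        (∫⁻ y in {y : ℝ | x < y ∧ ENNReal.ofReal y < L}, ENNReal.ofReal ((μ y)⁻¹)) ≤
      (∑ k ∈ Finset.range (n + 1), ENNReal.ofReal ((s k : ℝ) * (s (k + 1) : ℝ) * ℓ k)) *
        (∑' k : ℕ, ENNReal.ofReal (ℓ (n + k) / ((s (n + k) : ℝ) * (s (n + k + 1) : ℝ))))) ∧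
    (∀ n : ℕ,
      (1 / 4 : ℝ≥0∞) *
        ((∑ k ∈ Finset.range (n + 1), ENNReal.ofReal ((s k : ℝ) * (s (k + 1) : ℝ) * ℓ k)) *
          (∑' k : ℕ, ENNReal.ofReal (ℓ (n + k) / ((s (n + k) : ℝ) * (s (n + k + 1) : ℝ))))) ≤
      (∫⁻ y in Set.Ioo 0 ((t n + t (n + 1)) / 2), ENNReal.ofReal (μ y)) *
        (∫⁻ y in {y : ℝ | (t n + t (n + 1)) / 2 < y ∧ ENNReal.ofReal y < L},
          ENNReal.ofReal ((μ y)⁻¹))) := by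
  set a : ℕ → ℝ := fun k => (s k : ℝ) * (s (k + 1) : ℝ) with ha
  have hspos : ∀ k, (0 : ℝ) < s k := fun k => by
    exact_mod_cast Nat.lt_of_lt_of_le Nat.zero_lt_one (hs k)
  have hapos : ∀ k, 0 < a k := fun k => mul_pos (hspos k) (hspos (k + 1))
  have htpos : ∀ n, t n < t (n + 1) := fun n => by rw [htrec]; linarith [hℓ n]
  have htmono : StrictMono t := strictMono_nat_of_lt_succ htpos
  have htnonneg : ∀ n, 0 ≤ t n := fun n => ht0 ▸ htmono.monotone (Nat.zero_le n)
  -- `t N` as a partial sum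
  have hofT : ∀ N, ENNReal.ofReal (t N) = ∑ k ∈ Finset.range N, ENNReal.ofReal (ℓ k) := by
    intro N
    induction N with
    | zero => simp [ht0]
    | succ N ih =>
        rw [Finset.sum_range_succ, ← ih, htrec,
          ENNReal.ofReal_add (htnonneg N) (hℓ N).le]
  have htleL : ∀ N, ENNReal.ofReal (t N) ≤ L := fun N => by
    rw [hofT, hL]; exact ENNReal.sum_le_tsum _
  -- covering lemma
  have hcover : ∀ y : ℝ, 0 ≤ y → ENNReal.ofReal y < L →
      ∃ k, t k ≤ y ∧ y < t (k + 1) := by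
    intro y hy hyL
    have : ∃ N, y < t N := by
      rw [hL, ENNReal.tsum_eq_iSup_sum] at hyL
      obtain ⟨F, hF⟩ := lt_iSup_iff.mp hyL
      refine ⟨(F.sup id) + 1, ?_⟩
      have hF' : ∑ k ∈ F, ENNReal.ofReal (ℓ k)
          ≤ ∑ k ∈ Finset.range (F.sup id + 1), ENNReal.ofReal (ℓ k) := by
        apply Finset.sum_le_sum_of_subset
        intro k hk
        exact Finset.mem_range.mpr (Nat.lt_succ_of_le (Finset.le_sup (f := id) hk))
      have := hF.trans_le hF'
      rw [← hofT] at this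
      exact (ENNReal.ofReal_lt_ofReal_iff_of_nonneg hy).mp this
    obtain ⟨N, hN⟩ := this
    clear hyL
    induction N with
    | zero => exact absurd hN (by rw [ht0]; linarith)
    | succ N ih =>
        by_cases h : y < t N
        · exact ih h
        · exact ⟨N, not_lt.mp h, hN⟩
  -- integral of μ over a subinterval of [t n, t (n+1)]
  have hsubμ : ∀ n : ℕ, ∀ p q : ℝ, t n ≤ p → q ≤ t (n + 1) →
      ∫⁻ y in Set.Ioo p q, ENNReal.ofReal (μ y) = ENNReal.ofReal (a n * (q - p)) := by
    intro n p q hp hq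
    rw [kacKrein_lint_const measurableSet_Ioo
        (fun y hy => hμ n y ⟨hp.trans hy.1.le, hy.2.trans_le hq⟩),
      Real.volume_Ioo, ← ENNReal.ofReal_mul (hapos n).le]
  have hsubinv : ∀ n : ℕ, ∀ p q : ℝ, t n ≤ p → q ≤ t (n + 1) →
      ∫⁻ y in Set.Ioo p q, ENNReal.ofReal ((μ y)⁻¹) = ENNReal.ofReal ((q - p) / a n) := by
    intro n p q hp hq
    rw [kacKrein_lint_const measurableSet_Ioo
        (fun y hy => by rw [hμ n y ⟨hp.trans hy.1.le, hy.2.trans_le hq⟩]),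
      Real.volume_Ioo, ← ENNReal.ofReal_mul (inv_nonneg.mpr (hapos n).le),
      inv_mul_eq_div]
  have hIcoμ : ∀ k : ℕ, ∫⁻ y in Set.Ico (t k) (t (k + 1)), ENNReal.ofReal (μ y)
      = ENNReal.ofReal (a k * ℓ k) := by
    intro k
    rw [kacKrein_lint_const measurableSet_Ico (hμ k), Real.volume_Ico,
      ← ENNReal.ofReal_mul (hapos k).le, htrec]
    ring_nf
  have hIcoinv : ∀ k : ℕ, ∫⁻ y in Set.Ico (t k) (t (k + 1)), ENNReal.ofReal ((μ y)⁻¹)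
      = ENNReal.ofReal (ℓ k / a k) := by
    intro k
    rw [kacKrein_lint_const measurableSet_Ico (fun y hy => by rw [hμ k y hy]),
      Real.volume_Ico, ← ENNReal.ofReal_mul (inv_nonneg.mpr (hapos k).le),
      inv_mul_eq_div, htrec]
    ring_nf
  -- the first factor over [0, t N] : two-sided
  have hF1le : ∀ N : ℕ, ∫⁻ y in Set.Ioo 0 (t N), ENNReal.ofReal (μ y)
      ≤ ∑ k ∈ Finset.range N, ENNReal.ofReal (a k * ℓ k) := by
    intro N
    induction N with
    | zero => simp [ht0]
    | succ N ih =>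
        calc ∫⁻ y in Set.Ioo 0 (t (N + 1)), ENNReal.ofReal (μ y)
            ≤ ∫⁻ y in Set.Ioo 0 (t N) ∪ Set.Ico (t N) (t (N + 1)),
                ENNReal.ofReal (μ y) := by
              apply lintegral_mono_set
              intro y hy
              by_cases h : y < t N
              · exact Or.inl ⟨hy.1, h⟩
              · exact Or.inr ⟨not_lt.mp h, hy.2⟩
          _ ≤ (∫⁻ y in Set.Ioo 0 (t N), ENNReal.ofReal (μ y)) +
                ∫⁻ y in Set.Ico (t N) (t (N + 1)), ENNReal.ofReal (μ y) :=
              lintegral_union_le _ _ _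
          _ ≤ ∑ k ∈ Finset.range (N + 1), ENNReal.ofReal (a k * ℓ k) := by
              rw [Finset.sum_range_succ, hIcoμ N]
              exact add_le_add_left ih _
  have hF1ge : ∀ N : ℕ, ∑ k ∈ Finset.range N, ENNReal.ofReal (a k * ℓ k)
      ≤ ∫⁻ y in Set.Ioo 0 (t N), ENNReal.ofReal (μ y) := by
    intro N
    induction N with
    | zero => simp
    | succ N ih =>
        have hdisj : Disjoint (Set.Ioo 0 (t N)) (Set.Ioo (t N) (t (N + 1))) := by
          apply Set.disjoint_left.mpr
          intro y hy hy'
          exact absurd hy.2 (not_lt.mpr hy'.1.le)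
        calc ∑ k ∈ Finset.range (N + 1), ENNReal.ofReal (a k * ℓ k)
            = (∑ k ∈ Finset.range N, ENNReal.ofReal (a k * ℓ k)) +
                ENNReal.ofReal (a N * ℓ N) := Finset.sum_range_succ _ _
          _ ≤ (∫⁻ y in Set.Ioo 0 (t N), ENNReal.ofReal (μ y)) +
                ∫⁻ y in Set.Ioo (t N) (t (N + 1)), ENNReal.ofReal (μ y) := by
              rw [hsubμ N (t N) (t (N + 1)) le_rfl le_rfl]
              have : a N * (t (N + 1) - t N) = a N * ℓ N := by rw [htrec]; ring
              rw [this]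
              exact add_le_add_left ih _
          _ = ∫⁻ y in Set.Ioo 0 (t N) ∪ Set.Ioo (t N) (t (N + 1)),
                ENNReal.ofReal (μ y) :=
              (lintegral_union measurableSet_Ioo hdisj).symm
          _ ≤ ∫⁻ y in Set.Ioo 0 (t (N + 1)), ENNReal.ofReal (μ y) := by
              apply lintegral_mono_set
              rintro y (hy | hy)
              · exact ⟨hy.1, hy.2.trans (htpos N)⟩
              · exact ⟨lt_of_le_of_lt (htnonneg N) hy.1, hy.2⟩
  constructor
  · -- upper bound
    intro n x hx
    have h1 : ∫⁻ y in Set.Ioo 0 x, ENNReal.ofReal (μ y)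
        ≤ ∑ k ∈ Finset.range (n + 1), ENNReal.ofReal (a k * ℓ k) :=
      le_trans (lintegral_mono_set (Set.Ioo_subset_Ioo le_rfl hx.2.le)) (hF1le (n + 1))
    have h2 : ∫⁻ y in {y : ℝ | x < y ∧ ENNReal.ofReal y < L}, ENNReal.ofReal ((μ y)⁻¹)
        ≤ ∑' k : ℕ, ENNReal.ofReal (ℓ (n + k) / a (n + k)) := by
      have hsub : {y : ℝ | x < y ∧ ENNReal.ofReal y < L}
          ⊆ ⋃ j : ℕ, Set.Ico (t (n + j)) (t (n + j + 1)) := by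
        intro y hy
        have hy0 : 0 ≤ y := le_of_lt (lt_of_le_of_lt (le_trans (htnonneg n) hx.1) hy.1)
        obtain ⟨k, hk1, hk2⟩ := hcover y hy0 hy.2
        have hnk : n ≤ k := by
          by_contra h
          push_neg at h
          have : t (k + 1) ≤ t n := htmono.monotone h
          have : y < t n := hk2.trans_le this
          exact absurd (lt_of_le_of_lt hx.1 hy.1) (not_lt.mpr this.le)
        refine Set.mem_iUnion.mpr ⟨k - n, ?_⟩
        rw [Nat.add_sub_cancel' hnk]
        exact ⟨hk1, hk2⟩
      calc ∫⁻ y in {y : ℝ | x < y ∧ ENNReal.ofReal y < L}, ENNReal.ofReal ((μ y)⁻¹)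
          ≤ ∫⁻ y in ⋃ j : ℕ, Set.Ico (t (n + j)) (t (n + j + 1)),
              ENNReal.ofReal ((μ y)⁻¹) := lintegral_mono_set hsub
        _ ≤ ∑' j : ℕ, ∫⁻ y in Set.Ico (t (n + j)) (t (n + j + 1)),
              ENNReal.ofReal ((μ y)⁻¹) := lintegral_iUnion_le _ _
        _ = ∑' j : ℕ, ENNReal.ofReal (ℓ (n + j) / a (n + j)) := by
            exact tsum_congr fun j => hIcoinv (n + j)
    exact mul_le_mul' h1 h2
  · -- lower bound
    intro n
    set m : ℝ := (t n + t (n + 1)) / 2 with hm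
    have hm1 : t n < m := by rw [hm]; linarith [htpos n]
    have hm2 : m < t (n + 1) := by rw [hm]; linarith [htpos n]
    have hm0 : 0 < m := lt_of_le_of_lt (htnonneg n) hm1
    have hmtn : m - t n = ℓ n / 2 := by rw [hm, htrec]; ring
    have hmtn' : t (n + 1) - m = ℓ n / 2 := by rw [hm, htrec]; ring
    -- first factor lower bound
    have h1 : (1 / 2 : ℝ≥0∞) *
        (∑ k ∈ Finset.range (n + 1), ENNReal.ofReal (a k * ℓ k))
        ≤ ∫⁻ y in Set.Ioo 0 m, ENNReal.ofReal (μ y) := by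
      have hdisj : Disjoint (Set.Ioo 0 (t n)) (Set.Ioo (t n) m) := by
        apply Set.disjoint_left.mpr
        intro y hy hy'
        exact absurd hy.2 (not_lt.mpr hy'.1.le)
      have key : (∑ k ∈ Finset.range n, ENNReal.ofReal (a k * ℓ k)) +
          ENNReal.ofReal (a n * (ℓ n / 2))
          ≤ ∫⁻ y in Set.Ioo 0 m, ENNReal.ofReal (μ y) := by
        calc (∑ k ∈ Finset.range n, ENNReal.ofReal (a k * ℓ k)) +
              ENNReal.ofReal (a n * (ℓ n / 2))
            ≤ (∫⁻ y in Set.Ioo 0 (t n), ENNReal.ofReal (μ y)) +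
              ∫⁻ y in Set.Ioo (t n) m, ENNReal.ofReal (μ y) := by
              rw [hsubμ n (t n) m le_rfl hm2.le, hmtn]
              exact add_le_add_left (hF1ge n) _
          _ = ∫⁻ y in Set.Ioo 0 (t n) ∪ Set.Ioo (t n) m, ENNReal.ofReal (μ y) :=
              (lintegral_union measurableSet_Ioo hdisj).symm
          _ ≤ ∫⁻ y in Set.Ioo 0 m, ENNReal.ofReal (μ y) := by
              apply lintegral_mono_set
              rintro y (hy | hy)
              · exact ⟨hy.1, hy.2.trans hm1⟩
              · exact ⟨lt_of_le_of_lt (htnonneg n) hy.1, hy.2⟩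
      refine le_trans ?_ key
      rw [Finset.sum_range_succ, mul_add]
      apply add_le_add
      · exact mul_le_of_le_one_left zero_le (by norm_num)
      · rw [← ENNReal.ofReal_ofNat 2, ← ENNReal.ofReal_one,
          ← ENNReal.ofReal_div_of_pos (by norm_num : (0:ℝ) < 2),
          ← ENNReal.ofReal_mul (by norm_num : (0:ℝ) ≤ 1 / 2)]
        exact ENNReal.ofReal_le_ofReal (le_of_eq (by ring))
    -- second factor lower bound
    have h2 : (1 / 2 : ℝ≥0∞) *
        (∑' k : ℕ, ENNReal.ofReal (ℓ (n + k) / a (n + k)))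
        ≤ ∫⁻ y in {y : ℝ | m < y ∧ ENNReal.ofReal y < L}, ENNReal.ofReal ((μ y)⁻¹) := by
      set B : ℕ → Set ℝ := fun j => Set.Ioo (t (n + (j + 1))) (t (n + (j + 1) + 1)) with hB
      have hBmeas : ∀ j, MeasurableSet (B j) := fun j => measurableSet_Ioo
      have hBdisj : Pairwise (Function.onFun Disjoint B) := by
        intro i j hij
        rcases hij.lt_or_gt with h | h
        · apply Set.disjoint_left.mpr
          intro y hy hy'
          have : t (n + (i + 1) + 1) ≤ t (n + (j + 1)) := htmono.monotone (by omega)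
          exact absurd hy.2 (not_lt.mpr (this.trans hy'.1.le))
        · apply Set.disjoint_left.mpr
          intro y hy hy'
          have : t (n + (j + 1) + 1) ≤ t (n + (i + 1)) := htmono.monotone (by omega)
          exact absurd hy'.2 (not_lt.mpr (this.trans hy.1.le))
      have hBsub : ∀ j, B j ⊆ {y : ℝ | m < y ∧ ENNReal.ofReal y < L} := by
        intro j y hy
        have hy1 : t (n + 1) ≤ t (n + (j + 1)) := htmono.monotone (by omega)
        have hy0 : 0 ≤ y := le_of_lt (lt_of_le_of_lt (htnonneg _) hy.1)
        refine ⟨lt_of_lt_of_le hm2 (hy1.trans hy.1.le), ?_⟩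
        exact lt_of_lt_of_le
          ((ENNReal.ofReal_lt_ofReal_iff_of_nonneg hy0).mpr hy.2) (htleL _)
      have hI0sub : Set.Ioo m (t (n + 1)) ⊆ {y : ℝ | m < y ∧ ENNReal.ofReal y < L} := by
        intro y hy
        have hy0 : 0 ≤ y := (hm0.trans hy.1).le
        exact ⟨hy.1, lt_of_lt_of_le
          ((ENNReal.ofReal_lt_ofReal_iff_of_nonneg hy0).mpr hy.2) (htleL _)⟩
      have hdisj0 : Disjoint (Set.Ioo m (t (n + 1))) (⋃ j, B j) := by
        apply Set.disjoint_left.mpr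
        intro y hy hy'
        obtain ⟨j, hj⟩ := Set.mem_iUnion.mp hy'
        have : t (n + 1) ≤ t (n + (j + 1)) := htmono.monotone (by omega)
        exact absurd hy.2 (not_lt.mpr (this.trans hj.1.le))
      have key : ENNReal.ofReal (ℓ n / 2 / a n) +
          (∑' j : ℕ, ENNReal.ofReal (ℓ (n + (j + 1)) / a (n + (j + 1))))
          ≤ ∫⁻ y in {y : ℝ | m < y ∧ ENNReal.ofReal y < L}, ENNReal.ofReal ((μ y)⁻¹) := by
        have e0 : ∫⁻ y in Set.Ioo m (t (n + 1)), ENNReal.ofReal ((μ y)⁻¹)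
            = ENNReal.ofReal (ℓ n / 2 / a n) := by
          rw [hsubinv n m (t (n + 1)) hm1.le le_rfl, hmtn']
        have eB : ∫⁻ y in ⋃ j, B j, ENNReal.ofReal ((μ y)⁻¹)
            = ∑' j : ℕ, ENNReal.ofReal (ℓ (n + (j + 1)) / a (n + (j + 1))) := by
          rw [lintegral_iUnion hBmeas hBdisj]
          refine tsum_congr fun j => ?_
          rw [hsubinv (n + (j + 1)) _ _ le_rfl le_rfl, htrec]
          ring_nf
        calc ENNReal.ofReal (ℓ n / 2 / a n) +
              (∑' j : ℕ, ENNReal.ofReal (ℓ (n + (j + 1)) / a (n + (j + 1))))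
            = ∫⁻ y in Set.Ioo m (t (n + 1)) ∪ ⋃ j, B j, ENNReal.ofReal ((μ y)⁻¹) := by
              rw [lintegral_union (MeasurableSet.iUnion hBmeas) hdisj0, e0, eB]
          _ ≤ ∫⁻ y in {y : ℝ | m < y ∧ ENNReal.ofReal y < L},
                ENNReal.ofReal ((μ y)⁻¹) := by
              apply lintegral_mono_set
              rintro y (hy | hy)
              · exact hI0sub hy
              · obtain ⟨j, hj⟩ := Set.mem_iUnion.mp hy
                exact hBsub j hj
      refine le_trans ?_ key
      rw [tsum_eq_zero_add' ENNReal.summable, mul_add]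
      apply add_le_add
      · rw [Nat.add_zero, ← ENNReal.ofReal_ofNat 2, ← ENNReal.ofReal_one,
          ← ENNReal.ofReal_div_of_pos (by norm_num : (0:ℝ) < 2),
          ← ENNReal.ofReal_mul (by norm_num : (0:ℝ) ≤ 1 / 2)]
        exact ENNReal.ofReal_le_ofReal (le_of_eq (by ring))
      · exact mul_le_of_le_one_left zero_le (by norm_num)
    calc (1 / 4 : ℝ≥0∞) *
          ((∑ k ∈ Finset.range (n + 1), ENNReal.ofReal ((s k : ℝ) * (s (k + 1) : ℝ) * ℓ k)) *
            (∑' k : ℕ, ENNReal.ofReal (ℓ (n + k) / ((s (n + k) : ℝ) * (s (n + k + 1) : ℝ)))))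
        = ((1 / 2 : ℝ≥0∞) *
            (∑ k ∈ Finset.range (n + 1), ENNReal.ofReal (a k * ℓ k))) *
          ((1 / 2 : ℝ≥0∞) *
            (∑' k : ℕ, ENNReal.ofReal (ℓ (n + k) / a (n + k)))) := by
          rw [mul_mul_mul_comm]
          congr 1
          rw [show (1/2 : ℝ≥0∞) = ENNReal.ofReal (1/2) by
              rw [ENNReal.ofReal_div_of_pos (by norm_num)]; norm_num,
            ← ENNReal.ofReal_mul (by norm_num),
            show (1/2 * (1/2) : ℝ) = 1/4 by norm_num,
            ENNReal.ofReal_div_of_pos (by norm_num)]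
          norm_num
      _ ≤ (∫⁻ y in Set.Ioo 0 m, ENNReal.ofReal (μ y)) *
          (∫⁻ y in {y : ℝ | m < y ∧ ENNReal.ofReal y < L}, ENNReal.ofReal ((μ y)⁻¹)) :=
          mul_le_mul' h1 h2
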